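/- Let N ≥ 1, let y₁, …, y_N be integers with y_i > 1 for all i, let α be a positive integer, set z_i = α·y_i and p = 2N+1, and let a₁, …, a_{4N+3} be the sequence of rationals consisting of z₁, …, z_N, followed by N+1 copies of 1/p, followed by 2N+2 copies of 0. If there exist γ₁, …, γ_N ∈ {0,1,2} with ∑_{i=1}^N z_i γ_i = α², then there exists a permutation π of {1,…,4N+3} such that ∑_{u=1}^{4N+3} a_{π(u)} · a_{π(u+1)} = α²/p, with the convention π(4N+4) := π(1). (Forward direction, case (i), of the paper's Theorem 4.1.) -/

import Mathlib

namespace ExactCostTourAux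
open List

/-- last element of a list of rationals, `0` for the empty list -/
def lastI : List ℚ → ℚ
  | [] => 0
  | [x] => x
  | _ :: y :: t => lastI (y :: t)

@[simp] lemma lastI_nil : lastI [] = 0 := rfl
@[simp] lemma lastI_singleton (x : ℚ) : lastI [x] = x := rfl
@[simp] lemma lastI_cons_cons (x y : ℚ) (t : List ℚ) :
    lastI (x :: y :: t) = lastI (y :: t) := rfl

lemma lastI_append : ∀ (A B : List ℚ), B ≠ [] → lastI (A ++ B) = lastI B
  | [], B, _ => rfl
  | [x], B, h => by
    cases B with
    | nil => exact absurd rfl h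
    | cons b B' => simp
  | x :: y :: A', B, h => by
    have := lastI_append (y :: A') B h
    simpa using this

/-- sum of products of consecutive elements -/
def linSum : List ℚ → ℚ
  | [] => 0
  | x :: t => x * t.headI + linSum t

@[simp] lemma linSum_nil : linSum [] = 0 := rfl
lemma linSum_cons (x : ℚ) (t : List ℚ) :
    linSum (x :: t) = x * t.headI + linSum t := rfl

lemma hd0 : (default : ℚ) = 0 := rfl

lemma linSum_append : ∀ (A B : List ℚ),
    linSum (A ++ B) = linSum A + lastI A * B.headI + linSum B
  | [], B => by simp [linSum]
  | [x], B => by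
    cases B with
    | nil => simp [linSum, hd0]
    | cons b B' => simp [linSum_cons, hd0]
  | x :: y :: A', B => by
    have ih := linSum_append (y :: A') B
    simp only [cons_append, linSum_cons] at *
    rw [ih]
    simp [headI]
    ring

lemma linSum_replicate_zero : ∀ r : ℕ, linSum (replicate r (0:ℚ)) = 0
  | 0 => rfl
  | r + 1 => by simp [replicate_succ, linSum_cons, linSum_replicate_zero r]

lemma lastI_replicate_zero : ∀ r : ℕ, lastI (replicate r (0:ℚ)) = 0
  | 0 => rfl
  | 1 => rfl
  | r + 2 => by
    have := lastI_replicate_zero (r+1)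
    simpa [replicate_succ] using this

lemma castSucc_add_one {n : ℕ} (i : Fin n) : (i.castSucc + 1 : Fin (n+1)) = i.succ := by
  ext; simp [Fin.add_def]

lemma get_last_eq_lastI : ∀ (t : List ℚ) (x : ℚ),
    (x :: t).get (Fin.last t.length) = lastI (x :: t)
  | [], _ => rfl
  | y :: t', _ => get_last_eq_lastI t' y

lemma sum_adj : ∀ (t : List ℚ) (x : ℚ),
    ∑ i : Fin t.length, (x :: t).get i.castSucc * (x :: t).get i.succ
      = linSum (x :: t)
  | [], x => by simp [linSum, hd0]
  | y :: t', x => by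
    show ∑ i : Fin (t'.length + 1),
        (x :: y :: t').get i.castSucc * (x :: y :: t').get i.succ
      = linSum (x :: y :: t')
    rw [Fin.sum_univ_succ]
    have h1 : ∀ i : Fin t'.length,
        (x :: y :: t').get i.succ.castSucc * (x :: y :: t').get i.succ.succ
          = (y :: t').get i.castSucc * (y :: t').get i.succ := by
      intro i
      rw [← Fin.succ_castSucc]
      simp
    simp only [h1]
    rw [sum_adj t' y]
    simp [linSum]

lemma sum_cyc (x : ℚ) (t : List ℚ) :
    ∑ u : Fin (t.length + 1), (x :: t).get u * (x :: t).get ((u + 1 : Fin (t.length + 1)))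
      = linSum (x :: t) + lastI (x :: t) * x := by
  rw [Fin.sum_univ_castSucc]
  have h2 : ∀ i : Fin t.length, (i.castSucc + 1 : Fin (t.length + 1)) = i.succ :=
    castSucc_add_one
  simp only [h2]
  rw [sum_adj, Fin.last_add_one, get_last_eq_lastI]
  simp

lemma sum_cyc_cast (x : ℚ) (t : List ℚ) (n : ℕ) [NeZero n] (h : t.length + 1 = n) :
    ∑ u : Fin n, (x :: t).get (Fin.cast h.symm u) * (x :: t).get (Fin.cast h.symm (u + 1))
      = linSum (x :: t) + lastI (x :: t) * x := by
  subst h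
  have hu : ∀ (hh : t.length + 1 = t.length + 1) (u : Fin (t.length + 1)),
      Fin.cast hh u = u := fun _ u => Fin.ext rfl
  simp only [hu]
  exact sum_cyc x t

lemma ofFn_get_cast (l : List ℚ) (n : ℕ) (h : l.length = n) :
    List.ofFn (fun u : Fin n => l.get (Fin.cast h.symm u)) = l := by
  subst h
  have hu : ∀ (hh : l.length = l.length) (u : Fin l.length),
      Fin.cast hh u = u := fun _ u => Fin.ext rfl
  simp only [hu]
  exact List.ofFn_get l

lemma exists_perm {n : ℕ} (a w : Fin n → ℚ) (h : (List.ofFn w).Perm (List.ofFn a)) :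
    ∃ π : Equiv.Perm (Fin n), ∀ u, a (π u) = w u := by
  have hsort : w ∘ ⇑(Tuple.sort w) = a ∘ ⇑(Tuple.sort a) := by
    apply List.ofFn_injective
    refine List.Perm.eq_of_sortedLE
      (Tuple.monotone_sort w).sortedLE_ofFn (Tuple.monotone_sort a).sortedLE_ofFn ?_
    exact ((Tuple.sort w).ofFn_comp_perm w).trans
      (h.trans ((Tuple.sort a).ofFn_comp_perm a).symm)
  refine ⟨((Tuple.sort w).symm.trans (Tuple.sort a)), fun u => ?_⟩
  have := congrFun hsort ((Tuple.sort w).symm u)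
  simpa using this.symm

section blocks
variable (q : ℚ)

lemma lin_S1 : ∀ l : List ℚ, linSum (q :: l.flatMap fun x => [x, q]) = 2 * q * l.sum
  | [] => by simp [linSum, hd0]
  | x :: t => by
    have ih := lin_S1 t
    show linSum (q :: x :: q :: t.flatMap fun x => [x, q]) = _
    rw [linSum_cons, linSum_cons, ih]
    simp
    ring

lemma headI_flat3 (l : List ℚ) : (l.flatMap fun x => [(0:ℚ), x, q]).headI = 0 := by
  cases l <;> simp [hd0]

lemma headI_flat3_append (l M K : List ℚ) :
    ((l.flatMap fun x => [(0:ℚ), x, q]) ++ (((0:ℚ) :: M) ++ K)).headI = 0 := by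
  cases l <;> simp

lemma lin_S2 : ∀ l : List ℚ, linSum (l.flatMap fun x => [(0:ℚ), x, q]) = q * l.sum
  | [] => by simp [linSum]
  | x :: t => by
    have ih := lin_S2 t
    show linSum (0 :: x :: q :: t.flatMap fun x => [(0:ℚ), x, q]) = _
    rw [linSum_cons, linSum_cons, linSum_cons, ih, headI_flat3]
    simp
    ring

lemma lin_S3 : ∀ l : List ℚ, linSum ((0:ℚ) :: l.flatMap fun x => [x, (0:ℚ)]) = 0
  | [] => by simp [linSum, hd0]
  | x :: t => by
    have ih := lin_S3 t
    show linSum (0 :: x :: 0 :: t.flatMap fun x => [x, (0:ℚ)]) = _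
    rw [linSum_cons, linSum_cons, ih]
    simp

lemma lastI_S3 : ∀ l : List ℚ, lastI ((0:ℚ) :: l.flatMap fun x => [x, (0:ℚ)]) = 0
  | [] => rfl
  | x :: t => by
    have ih := lastI_S3 t
    show lastI (0 :: x :: 0 :: t.flatMap fun x => [x, (0:ℚ)]) = _
    rw [lastI_cons_cons, lastI_cons_cons]
    exact ih

lemma lin_S4 : ∀ l : List ℚ, linSum (l.flatMap fun _ => [q, (0:ℚ)]) = 0
  | [] => by simp [linSum]
  | x :: t => by
    have ih := lin_S4 t
    show linSum (q :: 0 :: t.flatMap fun _ => [q, (0:ℚ)]) = _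
    rw [linSum_cons, linSum_cons, ih]
    simp

lemma ms_flat1 : ∀ l : List ℚ, ((l.flatMap fun x => [x, q]) : Multiset ℚ)
    = (l : Multiset ℚ) + Multiset.replicate l.length q
  | [] => by simp
  | x :: t => by
    have ih := ms_flat1 t
    show ((x :: q :: t.flatMap fun x => [x, q] : List ℚ) : Multiset ℚ) = _
    simp only [← Multiset.cons_coe, ih, Multiset.replicate_succ, length_cons,
      Multiset.add_cons]
    simp only [← Multiset.singleton_add]
    abel

lemma ms_flat2 : ∀ l : List ℚ, ((l.flatMap fun x => [(0:ℚ), x, q]) : Multiset ℚ)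
    = (l : Multiset ℚ) + (Multiset.replicate l.length q + Multiset.replicate l.length 0)
  | [] => by simp
  | x :: t => by
    have ih := ms_flat2 t
    show ((0 :: x :: q :: t.flatMap fun x => [(0:ℚ), x, q] : List ℚ) : Multiset ℚ) = _
    simp only [← Multiset.cons_coe, ih, Multiset.replicate_succ, length_cons,
      Multiset.add_cons]
    simp only [← Multiset.singleton_add]
    abel

lemma ms_flat3 : ∀ l : List ℚ, ((l.flatMap fun x => [x, (0:ℚ)]) : Multiset ℚ)
    = (l : Multiset ℚ) + Multiset.replicate l.length 0
  | [] => by simp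
  | x :: t => by
    have ih := ms_flat3 t
    show ((x :: 0 :: t.flatMap fun x => [x, (0:ℚ)] : List ℚ) : Multiset ℚ) = _
    simp only [← Multiset.cons_coe, ih, Multiset.replicate_succ, length_cons,
      Multiset.add_cons]
    simp only [← Multiset.singleton_add]
    abel

lemma ms_flat4 : ∀ l : List ℚ, ((l.flatMap fun _ => [q, (0:ℚ)]) : Multiset ℚ)
    = Multiset.replicate l.length q + Multiset.replicate l.length 0
  | [] => by simp
  | x :: t => by
    have ih := ms_flat4 t
    show ((q :: 0 :: t.flatMap fun _ => [q, (0:ℚ)] : List ℚ) : Multiset ℚ) = _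
    simp only [← Multiset.cons_coe, ih, Multiset.replicate_succ, length_cons,
      Multiset.add_cons]
    simp only [← Multiset.singleton_add]
    abel

end blocks

lemma coe_append (l t : List ℚ) : ((l ++ t : List ℚ) : Multiset ℚ) = ↑l + ↑t := rfl

/-- the tail of the cyclic word -/
def wordTail (q : ℚ) (L2 L1 L0 : List ℚ) (r' : ℕ) : List ℚ :=
  (L2.flatMap fun x => [x, q]) ++
    ((L1.flatMap fun x => [(0:ℚ), x, q]) ++
      ((0:ℚ) :: ((L0.flatMap fun x => [x, (0:ℚ)]) ++
        ((L0.flatMap fun _ => [q, (0:ℚ)]) ++ List.replicate (r' + 1) (0:ℚ)))))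

lemma linSum_word (q : ℚ) (L2 L1 L0 : List ℚ) (r' : ℕ) :
    linSum (q :: wordTail q L2 L1 L0 r') = 2 * q * L2.sum + q * L1.sum := by
  show linSum ((q :: (L2.flatMap fun x => [x, q])) ++
      ((L1.flatMap fun x => [(0:ℚ), x, q]) ++
        ((0:ℚ) :: ((L0.flatMap fun x => [x, (0:ℚ)]) ++
          ((L0.flatMap fun _ => [q, (0:ℚ)]) ++ List.replicate (r' + 1) (0:ℚ)))))) = _
  rw [linSum_append, linSum_append]
  rw [show ((0:ℚ) :: ((L0.flatMap fun x => [x, (0:ℚ)]) ++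
      ((L0.flatMap fun _ => [q, (0:ℚ)]) ++ List.replicate (r' + 1) (0:ℚ))))
    = ((0:ℚ) :: L0.flatMap fun x => [x, (0:ℚ)]) ++
      ((L0.flatMap fun _ => [q, (0:ℚ)]) ++ List.replicate (r' + 1) (0:ℚ)) from rfl]
  rw [linSum_append, linSum_append]
  rw [lin_S1, lin_S2, lin_S3, lin_S4, linSum_replicate_zero, lastI_S3,
    headI_flat3_append]
  rw [show (((0:ℚ) :: L0.flatMap fun x => [x, (0:ℚ)]) ++
      ((L0.flatMap fun _ => [q, (0:ℚ)]) ++ List.replicate (r' + 1) (0:ℚ))).headI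
    = 0 from rfl]
  rw [show (List.replicate (r' + 1) (0:ℚ)).headI = 0 from rfl]
  ring

lemma lastI_word (q : ℚ) (L2 L1 L0 : List ℚ) (r' : ℕ) :
    lastI (q :: wordTail q L2 L1 L0 r') = 0 := by
  have h5 : List.replicate (r' + 1) (0:ℚ) ≠ [] := by simp
  have h45 : (L0.flatMap fun _ => [q, (0:ℚ)]) ++ List.replicate (r' + 1) (0:ℚ) ≠ [] :=
    List.append_ne_nil_of_right_ne_nil _ h5
  show lastI ((q :: (L2.flatMap fun x => [x, q])) ++
      ((L1.flatMap fun x => [(0:ℚ), x, q]) ++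
        ((0:ℚ) :: ((L0.flatMap fun x => [x, (0:ℚ)]) ++
          ((L0.flatMap fun _ => [q, (0:ℚ)]) ++ List.replicate (r' + 1) (0:ℚ)))))) = 0
  rw [lastI_append _ _ (List.append_ne_nil_of_right_ne_nil _ (List.cons_ne_nil _ _)),
    lastI_append _ _ (List.cons_ne_nil _ _)]
  rw [show ((0:ℚ) :: ((L0.flatMap fun x => [x, (0:ℚ)]) ++
      ((L0.flatMap fun _ => [q, (0:ℚ)]) ++ List.replicate (r' + 1) (0:ℚ))))
    = ((0:ℚ) :: L0.flatMap fun x => [x, (0:ℚ)]) ++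
      ((L0.flatMap fun _ => [q, (0:ℚ)]) ++ List.replicate (r' + 1) (0:ℚ)) from rfl]
  rw [lastI_append _ _ h45, lastI_append _ _ h5, lastI_replicate_zero]

lemma ms_word (q : ℚ) (L2 L1 L0 : List ℚ) (r' : ℕ) :
    ((q :: wordTail q L2 L1 L0 r' : List ℚ) : Multiset ℚ)
      = ((L2 : Multiset ℚ) + (L1 : Multiset ℚ) + (L0 : Multiset ℚ))
        + ((Multiset.replicate 1 q + Multiset.replicate L2.length q
            + Multiset.replicate L1.length q + Multiset.replicate L0.length q)
          + (Multiset.replicate L1.length 0 + Multiset.replicate 1 0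
            + Multiset.replicate L0.length 0 + Multiset.replicate L0.length 0
            + Multiset.replicate (r' + 1) 0)) := by
  simp only [wordTail, coe_append, ← Multiset.cons_coe]
  rw [ms_flat1, ms_flat2, ms_flat3, ms_flat4, Multiset.coe_replicate]
  simp only [Multiset.replicate_one, ← Multiset.singleton_add]
  abel

end ExactCostTourAux


open ExactCostTourAux in
/-- Forward direction (case (i)) of the paper's Theorem 4.1: if some
`γ₁,…,γ_N ∈ {0,1,2}` satisfy `∑ z_i γ_i = α²` (where `z_i = α·y_i`), then the
sequence `a` consisting of `z₁,…,z_N`, then `N+1` copies of `1/p` (`p = 2N+1`),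
then `2N+2` zeros, admits a cyclic arrangement `π` of total adjacent-product cost
exactly `α²/p`. -/
theorem exact_cost_tour_forward (N : ℕ) (hN : 1 ≤ N) (y : Fin N → ℤ)
    (hy : ∀ i, 1 < y i) (α : ℕ) (hα : 0 < α) :
    let a : Fin (4 * N + 3) → ℚ := fun u =>
      if h : (u : ℕ) < N then ((α : ℚ) * (y ⟨u, h⟩ : ℚ))
      else if (u : ℕ) < 2 * N + 1 then 1 / (2 * N + 1 : ℚ)
      else 0
    (∃ γ : Fin N → ℕ, (∀ i, γ i ≤ 2) ∧
        ∑ i, (α : ℤ) * y i * (γ i : ℤ) = (α : ℤ) ^ 2) →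
      ∃ π : Equiv.Perm (Fin (4 * N + 3)),
        ∑ u : Fin (4 * N + 3), a (π u) * a (π (u + 1))
          = (α : ℚ) ^ 2 / (2 * N + 1 : ℚ) := by
  intro a
  rintro ⟨γ, hγ2, hγsum⟩
  classical
  set l2 : List (Fin N) := (List.finRange N).filter (fun i => γ i == 2) with hl2
  set rest : List (Fin N) := (List.finRange N).filter (fun i => !(γ i == 2)) with hrest
  set l1 : List (Fin N) := rest.filter (fun i => γ i == 1) with hl1
  set l0 : List (Fin N) := rest.filter (fun i => !(γ i == 1)) with hl0
  have hsplit : (l2 ++ (l1 ++ l0)).Perm (List.finRange N) := by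
    have h1 : (l1 ++ l0).Perm rest := List.filter_append_perm _ rest
    have h2 : (l2 ++ rest).Perm (List.finRange N) := List.filter_append_perm _ _
    exact (h1.append_left l2).trans h2
  have hk : l2.length + (l1.length + l0.length) = N := by
    have := hsplit.length_eq
    simpa using this
  have hm2 : ∀ i ∈ l2, γ i = 2 := by
    intro i hi
    rw [hl2, List.mem_filter] at hi
    simpa using hi.2
  have hm1 : ∀ i ∈ l1, γ i = 1 := by
    intro i hi
    rw [hl1, List.mem_filter] at hi
    simpa using hi.2
  have hm0 : ∀ i ∈ l0, γ i = 0 := by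
    intro i hi
    rw [hl0, List.mem_filter] at hi
    obtain ⟨hir, hin1⟩ := hi
    rw [hrest, List.mem_filter] at hir
    have h2' : ¬ γ i = 2 := by simpa using hir.2
    have h1' : ¬ γ i = 1 := by simpa using hin1
    have := hγ2 i
    omega
  set L2 : List ℚ := l2.map (fun i => (α:ℚ) * (y i : ℚ)) with hL2
  set L1 : List ℚ := l1.map (fun i => (α:ℚ) * (y i : ℚ)) with hL1
  set L0 : List ℚ := l0.map (fun i => (α:ℚ) * (y i : ℚ)) with hL0
  have hlen2 : L2.length = l2.length := by rw [hL2]; simp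
  have hlen1 : L1.length = l1.length := by rw [hL1]; simp
  have hlen0 : L0.length = l0.length := by rw [hL0]; simp
  set r' : ℕ := 2*N - (l1.length + 2 * l0.length) with hr'
  have hr'1 : l1.length + 2 * l0.length + (r' + 1) = 2*N + 1 := by omega
  -- decomposition of `List.ofFn a`
  have e : 4*N+3 = N + ((N+1) + (2*N+2)) := by omega
  have ha : a = (fun u : Fin (4*N+3) =>
      if h : (u : ℕ) < N then ((α : ℚ) * (y ⟨u, h⟩ : ℚ))
      else if (u : ℕ) < 2 * N + 1 then 1 / (2 * (N:ℚ) + 1)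
      else 0) := rfl
  have hchunk1 : (fun i : Fin N => a (Fin.cast e.symm (Fin.castAdd ((N+1) + (2*N+2)) i)))
      = (fun i : Fin N => (α:ℚ) * (y i : ℚ)) := by
    funext i
    have hlt : ((Fin.cast e.symm (Fin.castAdd ((N+1) + (2*N+2)) i)) : ℕ) < N := i.isLt
    rw [ha]
    beta_reduce
    rw [dif_pos hlt]
    have hfe : (⟨((Fin.cast e.symm (Fin.castAdd ((N+1) + (2*N+2)) i)) : ℕ), hlt⟩ : Fin N) = i :=
      Fin.ext rfl
    rw [hfe]
  have hchunk2 : (fun j : Fin (N+1) => a (Fin.cast e.symm (Fin.natAdd N (Fin.castAdd (2*N+2) j))))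
      = (fun _ : Fin (N+1) => 1 / (2 * (N:ℚ) + 1)) := by
    funext j
    have hv : ((Fin.cast e.symm (Fin.natAdd N (Fin.castAdd (2*N+2) j))) : ℕ) = N + (j : ℕ) := rfl
    have hj := j.isLt
    rw [ha]
    beta_reduce
    rw [dif_neg (by rw [hv]; omega), if_pos (by rw [hv]; omega)]
  have hchunk3 : (fun j : Fin (2*N+2) => a (Fin.cast e.symm (Fin.natAdd N (Fin.natAdd (N+1) j))))
      = (fun _ : Fin (2*N+2) => (0:ℚ)) := by
    funext j
    have hv : ((Fin.cast e.symm (Fin.natAdd N (Fin.natAdd (N+1) j))) : ℕ) = N + ((N+1) + (j : ℕ)) := rfl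
    rw [ha]
    beta_reduce
    rw [dif_neg (by rw [hv]; omega), if_neg (by rw [hv]; omega)]
  have hofn : List.ofFn a
      = ((List.finRange N).map (fun i => (α:ℚ) * (y i:ℚ))) ++
        (List.replicate (N+1) (1 / (2 * (N:ℚ) + 1)) ++ List.replicate (2*N+2) (0:ℚ)) := by
    calc List.ofFn a
        = List.ofFn (fun i : Fin (N + ((N+1) + (2*N+2))) => a (Fin.cast e.symm i)) :=
          List.ofFn_congr e a
      _ = (List.ofFn fun i : Fin N => a (Fin.cast e.symm (Fin.castAdd ((N+1) + (2*N+2)) i)))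
          ++ (List.ofFn fun j : Fin ((N+1) + (2*N+2)) => a (Fin.cast e.symm (Fin.natAdd N j))) :=
          List.ofFn_add
      _ = (List.ofFn fun i : Fin N => a (Fin.cast e.symm (Fin.castAdd ((N+1) + (2*N+2)) i)))
          ++ ((List.ofFn fun j : Fin (N+1) => a (Fin.cast e.symm (Fin.natAdd N (Fin.castAdd (2*N+2) j))))
            ++ (List.ofFn fun j : Fin (2*N+2) => a (Fin.cast e.symm (Fin.natAdd N (Fin.natAdd (N+1) j))))) := by
          rw [List.ofFn_add (f := fun j : Fin ((N+1) + (2*N+2)) => a (Fin.cast e.symm (Fin.natAdd N j)))]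
          rfl
      _ = _ := by
          rw [hchunk1, hchunk2, hchunk3, List.ofFn_const, List.ofFn_const, List.ofFn_eq_map]
  -- the multiset identity
  have hzsum : ((L2 : Multiset ℚ) + (L1 : Multiset ℚ) + (L0 : Multiset ℚ))
      = (((List.finRange N).map (fun i => (α:ℚ)*(y i:ℚ)) : List ℚ) : Multiset ℚ) := by
    have hp := hsplit.map (fun i => (α:ℚ)*(y i:ℚ))
    rw [← Multiset.coe_eq_coe] at hp
    rw [hL2, hL1, hL0, ← hp, List.map_append, List.map_append, coe_append, coe_append]
    abel
  have hcnt1 : Multiset.replicate (N+1) (1 / (2 * (N:ℚ) + 1))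
      = Multiset.replicate 1 (1 / (2 * (N:ℚ) + 1)) + Multiset.replicate L2.length (1 / (2 * (N:ℚ) + 1))
        + Multiset.replicate L1.length (1 / (2 * (N:ℚ) + 1)) + Multiset.replicate L0.length (1 / (2 * (N:ℚ) + 1)) := by
    rw [← Multiset.replicate_add, ← Multiset.replicate_add, ← Multiset.replicate_add]
    congr 1
    rw [hlen2, hlen1, hlen0]
    omega
  have hcnt0 : Multiset.replicate (2*N+2) (0:ℚ)
      = Multiset.replicate L1.length (0:ℚ) + Multiset.replicate 1 (0:ℚ)
        + Multiset.replicate L0.length (0:ℚ) + Multiset.replicate L0.length (0:ℚ)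
        + Multiset.replicate (r' + 1) (0:ℚ) := by
    rw [← Multiset.replicate_add, ← Multiset.replicate_add, ← Multiset.replicate_add,
      ← Multiset.replicate_add]
    congr 1
    rw [hlen1, hlen0]
    omega
  have hWm : (((1 / (2 * (N:ℚ) + 1)) :: wordTail (1 / (2 * (N:ℚ) + 1)) L2 L1 L0 r' : List ℚ) : Multiset ℚ)
      = ↑(List.ofFn a) := by
    rw [hofn, coe_append, coe_append, Multiset.coe_replicate, Multiset.coe_replicate,
      ms_word, ← hzsum, hcnt1, hcnt0]
  have hperm : ((1 / (2 * (N:ℚ) + 1)) :: wordTail (1 / (2 * (N:ℚ) + 1)) L2 L1 L0 r').Perm (List.ofFn a) :=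
    Multiset.coe_eq_coe.1 hWm
  have hlen' : (wordTail (1 / (2 * (N:ℚ) + 1)) L2 L1 L0 r').length + 1 = 4*N+3 := by
    have := hperm.length_eq
    simpa using this
  haveI : NeZero (4*N+3) := ⟨by omega⟩
  obtain ⟨π, hπ⟩ := exists_perm a
      (fun u : Fin (4*N+3) =>
        ((1 / (2 * (N:ℚ) + 1)) :: wordTail (1 / (2 * (N:ℚ) + 1)) L2 L1 L0 r').get (Fin.cast hlen'.symm u))
      (by
        rw [ofFn_get_cast ((1 / (2 * (N:ℚ) + 1)) :: wordTail (1 / (2 * (N:ℚ) + 1)) L2 L1 L0 r')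
          (4*N+3)
          (show ((1 / (2 * (N:ℚ) + 1)) :: wordTail (1 / (2 * (N:ℚ) + 1)) L2 L1 L0 r').length
            = 4*N+3 from hlen')]
        exact hperm)
  -- the arithmetic identity
  have harith : 2 * L2.sum + L1.sum = (α:ℚ)^2 := by
    have hcast : (∑ i : Fin N, (α:ℚ) * (y i:ℚ) * ((γ i : ℕ):ℚ)) = (α:ℚ)^2 := by
      exact_mod_cast hγsum
    have h1 : (((List.finRange N)).map (fun i => (α:ℚ) * (y i:ℚ) * ((γ i : ℕ):ℚ))).sum = (α:ℚ)^2 := by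
      rw [← List.ofFn_eq_map, List.sum_ofFn]; exact hcast
    have h2 := (hsplit.map (fun i => (α:ℚ) * (y i:ℚ) * ((γ i : ℕ):ℚ))).sum_eq
    rw [List.map_append, List.map_append, List.sum_append, List.sum_append, h1] at h2
    have e2 : (l2.map (fun i => (α:ℚ) * (y i:ℚ) * ((γ i : ℕ):ℚ)))
        = l2.map (fun i => 2 * ((α:ℚ) * (y i:ℚ))) :=
      List.map_congr_left (fun i hi => by rw [hm2 i hi]; push_cast; ring)
    have e1 : (l1.map (fun i => (α:ℚ) * (y i:ℚ) * ((γ i : ℕ):ℚ)))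
        = l1.map (fun i => (α:ℚ) * (y i:ℚ)) :=
      List.map_congr_left (fun i hi => by rw [hm1 i hi]; push_cast; ring)
    have e0 : (l0.map (fun i => (α:ℚ) * (y i:ℚ) * ((γ i : ℕ):ℚ)))
        = l0.map (fun _ => (0:ℚ)) :=
      List.map_congr_left (fun i hi => by rw [hm0 i hi]; push_cast; ring)
    rw [e2, e1, e0, List.sum_map_mul_left,
      show (l0.map fun _ => (0:ℚ)).sum = 0 from by simp] at h2
    rw [hL2, hL1]
    linarith [h2]
  refine ⟨π, ?_⟩
  calc ∑ u : Fin (4*N+3), a (π u) * a (π (u+1))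
      = ∑ u : Fin (4*N+3),
          (((1 / (2 * (N:ℚ) + 1)) :: wordTail (1 / (2 * (N:ℚ) + 1)) L2 L1 L0 r').get (Fin.cast hlen'.symm u))
          * (((1 / (2 * (N:ℚ) + 1)) :: wordTail (1 / (2 * (N:ℚ) + 1)) L2 L1 L0 r').get (Fin.cast hlen'.symm (u+1))) := by
        refine Finset.sum_congr rfl fun u _ => ?_
        rw [hπ u, hπ (u+1)]
    _ = linSum ((1 / (2 * (N:ℚ) + 1)) :: wordTail (1 / (2 * (N:ℚ) + 1)) L2 L1 L0 r')
        + lastI ((1 / (2 * (N:ℚ) + 1)) :: wordTail (1 / (2 * (N:ℚ) + 1)) L2 L1 L0 r') * (1 / (2 * (N:ℚ) + 1)) :=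
        sum_cyc_cast _ _ _ hlen'
    _ = 2 * (1 / (2 * (N:ℚ) + 1)) * L2.sum + (1 / (2 * (N:ℚ) + 1)) * L1.sum
        + 0 * (1 / (2 * (N:ℚ) + 1)) := by rw [linSum_word, lastI_word]
    _ = (2 * L2.sum + L1.sum) * (1 / (2 * (N:ℚ) + 1)) := by ring
    _ = (α:ℚ)^2 / (2 * (N:ℚ) + 1) := by rw [harith]; ring
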